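/- Let c1, c2 > 0 be real numbers. (i) If c2 ≠ 4c1, then setting α := c1 and β := c1·c2/(4c1 − c2), the numbers α, β are nonzero, the symmetric bilinear form Q on g = l × k defined by Q((u,v),(u',v')) := α⟨u,u'⟩ + β⟨v,v'⟩ is ad(g)-invariant and nondegenerate, the Q-orthogonal complement p of h in g satisfies g = h ⊕ p, the projection π of g onto m along h restricts to a linear bijection from p onto m, and Q(w,w') = g_{c1,c2}(π(w), π(w')) for all w, w' ∈ p. (ii) If c2 = 4c1, then q := (m1 ⊕ k) × {0} is a linear complement to h in g that is invariant under ad(Z) for every Z ∈ h, the projection π of g onto m along h restricts to a linear bijection from q onto m, and c1⟨u,u'⟩ = g_{c1,c2}(π((u,0)), π((u',0))) for all u, u' ∈ m1 ⊕ k ⊆ l. -/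

import Mathlib

/-! Context: `l` is a compact simple real Lie algebra with `⟨x,y⟩ = −B_l(x,y)`;
`k`, `k1` are Lie subalgebras of `l` with `[k,k1] = 0`, `⟨k,k1⟩ = 0` and
`k ⊕ k1` a Lie subalgebra of `l`; `m1` is the orthogonal complement of `k ⊕ k1`
in `l`; `g = l × k`, `h = {(X+W, X) : X ∈ k, W ∈ k1}`, `m2 = {(X,−X) : X ∈ k}`,
`m = (m1 × {0}) ⊕ m2`. -/

/-- Componentwise Lie ring structure on a product. -/
instance prodLieRing {L M : Type*} [LieRing L] [LieRing M] : LieRing (L × M) where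
  bracket p q := (⁅p.1, q.1⁆, ⁅p.2, q.2⁆)
  add_lie p q r := by
    show (⁅p.1 + q.1, r.1⁆, ⁅p.2 + q.2, r.2⁆)
        = (⁅p.1, r.1⁆, ⁅p.2, r.2⁆) + (⁅q.1, r.1⁆, ⁅q.2, r.2⁆)
    simp [add_lie, Prod.mk_add_mk]
  lie_add p q r := by
    show (⁅p.1, q.1 + r.1⁆, ⁅p.2, q.2 + r.2⁆)
        = (⁅p.1, q.1⁆, ⁅p.2, q.2⁆) + (⁅p.1, r.1⁆, ⁅p.2, r.2⁆)
    simp [lie_add, Prod.mk_add_mk]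
  lie_self p := by
    show (⁅p.1, p.1⁆, ⁅p.2, p.2⁆) = (0 : L × M)
    simp
  leibniz_lie p q r := by
    show (⁅p.1, ⁅q.1, r.1⁆⁆, ⁅p.2, ⁅q.2, r.2⁆⁆)
        = (⁅⁅p.1, q.1⁆, r.1⁆, ⁅⁅p.2, q.2⁆, r.2⁆) + (⁅q.1, ⁅p.1, r.1⁆⁆, ⁅q.2, ⁅p.2, r.2⁆⁆)
    simp [Prod.mk_add_mk]

/-- Componentwise Lie algebra structure on a product. -/
instance prodLieAlgebra {R : Type*} [CommRing R] {L M : Type*} [LieRing L] [LieRing M]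
    [LieAlgebra R L] [LieAlgebra R M] : LieAlgebra R (L × M) where
  lie_smul t p q := by
    show (⁅p.1, (t • q).1⁆, ⁅p.2, (t • q).2⁆) = t • (⁅p.1, q.1⁆, ⁅p.2, q.2⁆)
    simp [Prod.smul_mk]

variable {l : Type*} [LieRing l] [LieAlgebra ℝ l] [FiniteDimensional ℝ l]

/-- `⟨x, y⟩ := −B_l(x, y)`, the negative of the Killing form, as a bilinear form. -/
noncomputable def negKilling (l : Type*) [LieRing l] [LieAlgebra ℝ l] :
    LinearMap.BilinForm ℝ l :=
  -(killingForm ℝ l)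

/-- `m1`: the `⟨·,·⟩`-orthogonal complement of `k ⊕ k1` in `l`. -/
noncomputable def mOne (k k1 : LieSubalgebra ℝ l) : Submodule ℝ l :=
  (k.toSubmodule ⊔ k1.toSubmodule).orthogonalBilin (negKilling l)

/-- `h = {(X + W, X) : X ∈ k, W ∈ k1} ⊆ g = l × k`. -/
def hSub (k k1 : LieSubalgebra ℝ l) : Submodule ℝ (l × k) where
  carrier := {p | ∃ (X : k) (W : k1), p = ((X : l) + (W : l), X)}
  add_mem' := by
    rintro p q ⟨X, W, rfl⟩ ⟨X', W', rfl⟩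
    exact ⟨X + X', W + W', by simp [Prod.ext_iff]; abel⟩
  zero_mem' := ⟨0, 0, by simp [Prod.ext_iff]⟩
  smul_mem' := by
    rintro c p ⟨X, W, rfl⟩
    refine ⟨c • X, c • W, ?_⟩
    simp only [Prod.smul_mk, Prod.mk.injEq]
    exact ⟨smul_add c _ _, trivial⟩

/-- `m2 = {(X, −X) : X ∈ k} ⊆ g = l × k`. -/
def mTwo (k : LieSubalgebra ℝ l) : Submodule ℝ (l × k) where
  carrier := {p | ∃ X : k, p = ((X : l), -X)}
  add_mem' := by
    rintro p q ⟨X, rfl⟩ ⟨X', rfl⟩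
    exact ⟨X + X', by simp [Prod.ext_iff]; abel⟩
  zero_mem' := ⟨0, by simp [Prod.ext_iff]⟩
  smul_mem' := by
    rintro c p ⟨X, rfl⟩
    refine ⟨c • X, ?_⟩
    simp only [Prod.smul_mk, Prod.mk.injEq, smul_neg]
    exact ⟨rfl, trivial⟩

/-- `m = (m1 × {0}) ⊕ m2 ⊆ g = l × k`. -/
noncomputable def mSub (k k1 : LieSubalgebra ℝ l) : Submodule ℝ (l × k) :=
  (mOne k k1).prod (⊥ : Submodule ℝ k) ⊔ mTwo k

/-- The bi-invariant form `Q((u,v),(u',v')) = α⟨u,u'⟩ + β⟨v,v'⟩` on `g = l × k`. -/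
noncomputable def qForm (k : LieSubalgebra ℝ l) (α β : ℝ) :
    LinearMap.BilinForm ℝ (l × k) :=
  α • (negKilling l).comp (LinearMap.fst ℝ l k) (LinearMap.fst ℝ l k) +
    β • (negKilling l).comp (k.incl.toLinearMap.comp (LinearMap.snd ℝ l k))
      (k.incl.toLinearMap.comp (LinearMap.snd ℝ l k))

set_option linter.unusedSectionVars false
set_option maxHeartbeats 1000000

section Helpers
variable {l : Type*} [LieRing l] [LieAlgebra ℝ l] [FiniteDimensional ℝ l]

lemma nk_apply (x y : l) : negKilling l x y = - killingForm ℝ l x y := rfl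

lemma nk_symm (x y : l) : negKilling l x y = negKilling l y x := by
  simp only [nk_apply, neg_inj]
  exact LieModule.traceForm_comm ℝ l l x y

lemma nk_inv (z x y : l) : negKilling l ⁅z, x⁆ y + negKilling l x ⁅z, y⁆ = 0 := by
  simp only [nk_apply]
  have h2 : killingForm ℝ l ⁅z, x⁆ y = - killingForm ℝ l x ⁅z, y⁆ :=
    LieModule.traceForm_apply_lie_apply' ℝ l l z x y
  rw [h2]; ring

lemma nk_lie (n z a : l) : negKilling l n ⁅z, a⁆ = negKilling l ⁅n, z⁆ a := by
  simp only [nk_apply, neg_inj]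
  exact (LieModule.traceForm_apply_lie_apply ℝ l l n z a).symm

lemma nk_add_left (x y z : l) :
    negKilling l (x + y) z = negKilling l x z + negKilling l y z := by
  simp [nk_apply]

lemma nk_add_right (x y z : l) :
    negKilling l x (y + z) = negKilling l x y + negKilling l x z := by
  simp [nk_apply]; ring

lemma nk_smul_left (c : ℝ) (x z : l) :
    negKilling l (c • x) z = c * negKilling l x z := by
  simp [nk_apply]

lemma nk_smul_right (c : ℝ) (x z : l) :
    negKilling l x (c • z) = c * negKilling l x z := by
  simp [nk_apply]

lemma nk_zero_left (z : l) : negKilling l 0 z = 0 := by simp [nk_apply]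
lemma nk_zero_right (z : l) : negKilling l z 0 = 0 := by simp [nk_apply]

lemma qForm_apply' {k : LieSubalgebra ℝ l} (α β : ℝ) (p q : l × k) :
    qForm k α β p q = α * negKilling l p.1 q.1 + β * negKilling l (p.2 : l) (q.2 : l) := rfl

lemma mem_mOne {k k1 : LieSubalgebra ℝ l} {a : l} :
    a ∈ mOne k k1 ↔ ∀ n ∈ k.toSubmodule ⊔ k1.toSubmodule, negKilling l n a = 0 := Iff.rfl

lemma mem_hSub {k k1 : LieSubalgebra ℝ l} {p : l × k} :
    p ∈ hSub k k1 ↔ ∃ (X : k) (W : k1), p = ((X : l) + (W : l), X) := Iff.rfl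

lemma mem_mSub {k k1 : LieSubalgebra ℝ l} {p : l × k} :
    p ∈ mSub k k1 ↔ ∃ U ∈ mOne k k1, ∃ Y : k, p = (U + (Y : l), -Y) := by
  constructor
  · intro hp
    obtain ⟨a, ha, b, hb, rfl⟩ := Submodule.mem_sup.1 hp
    obtain ⟨ha1, ha2⟩ := Submodule.mem_prod.1 ha
    obtain ⟨Y, rfl⟩ := hb
    refine ⟨a.1, ha1, Y, ?_⟩
    have : a.2 = 0 := ha2
    ext <;> simp [this]
  · rintro ⟨U, hU, Y, rfl⟩
    have : ((U + (Y:l), -Y) : l × k) = (U, 0) + ((Y:l), -Y) := by ext <;> simp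
    rw [this]
    exact Submodule.add_mem _
      (Submodule.mem_sup_left (Submodule.mem_prod.2 ⟨hU, rfl⟩))
      (Submodule.mem_sup_right ⟨Y, rfl⟩)

end Helpers
set_option linter.unusedSectionVars false in
set_option linter.unusedVariables false in
/-- parts (i) and (ii). -/
theorem statement1 (hsimple : LieAlgebra.IsSimple ℝ l)
    (hneg : ∀ x : l, x ≠ 0 → killingForm ℝ l x x < 0)
    (k k1 : LieSubalgebra ℝ l)
    (hcomm : ∀ x ∈ k, ∀ y ∈ k1, ⁅x, y⁆ = (0 : l))
    (horth : ∀ x ∈ k, ∀ y ∈ k1, negKilling l x y = 0)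
    (hdisj : k.toSubmodule ⊓ k1.toSubmodule = ⊥)
    (hsum : ∀ x y : l, x ∈ k.toSubmodule ⊔ k1.toSubmodule →
      y ∈ k.toSubmodule ⊔ k1.toSubmodule → ⁅x, y⁆ ∈ k.toSubmodule ⊔ k1.toSubmodule)
    (c1 c2 : ℝ) (hc1 : 0 < c1) (hc2 : 0 < c2)
    (gm : (l × k) → (l × k) → ℝ)
    (hgm : ∀ U U' : l, U ∈ mOne k k1 → U' ∈ mOne k k1 → ∀ X X' : k,
      gm (U + (X : l), -X) (U' + (X' : l), -X')
        = c1 * negKilling l U U' + c2 * negKilling l (X : l) (X' : l))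
    (π : (l × k) →ₗ[ℝ] (l × k))
    (hπ : ∀ w : l × k, π w ∈ mSub k k1 ∧ w - π w ∈ hSub k k1) :
    -- (i) the case `c2 ≠ 4 c1`
    (c2 ≠ 4 * c1 →
      let α := c1
      let β := c1 * c2 / (4 * c1 - c2)
      α ≠ 0 ∧ β ≠ 0 ∧
      (∀ z w v : l × k, qForm k α β ⁅z, w⁆ v + qForm k α β w ⁅z, v⁆ = 0) ∧
      (∀ w : l × k, (∀ v : l × k, qForm k α β w v = 0) → w = 0) ∧
      (hSub k k1 ⊓ (hSub k k1).orthogonalBilin (qForm k α β) = ⊥ ∧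
        hSub k k1 ⊔ (hSub k k1).orthogonalBilin (qForm k α β) = ⊤) ∧
      (∀ w ∈ (hSub k k1).orthogonalBilin (qForm k α β), π w ∈ mSub k k1) ∧
      (∀ w ∈ (hSub k k1).orthogonalBilin (qForm k α β),
        ∀ w' ∈ (hSub k k1).orthogonalBilin (qForm k α β), π w = π w' → w = w') ∧
      (∀ v ∈ mSub k k1, ∃ w ∈ (hSub k k1).orthogonalBilin (qForm k α β), π w = v) ∧
      (∀ w ∈ (hSub k k1).orthogonalBilin (qForm k α β),
        ∀ w' ∈ (hSub k k1).orthogonalBilin (qForm k α β),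
          qForm k α β w w' = gm (π w) (π w'))) ∧
    -- (ii) the case `c2 = 4 c1`
    (c2 = 4 * c1 →
      let q : Submodule ℝ (l × k) := (mOne k k1 ⊔ k.toSubmodule).prod (⊥ : Submodule ℝ k)
      (hSub k k1 ⊓ q = ⊥ ∧ hSub k k1 ⊔ q = ⊤) ∧
      (∀ Z ∈ hSub k k1, ∀ w ∈ q, ⁅Z, w⁆ ∈ q) ∧
      (∀ w ∈ q, π w ∈ mSub k k1) ∧
      (∀ w ∈ q, ∀ w' ∈ q, π w = π w' → w = w') ∧
      (∀ v ∈ mSub k k1, ∃ w ∈ q, π w = v) ∧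
      (∀ u u' : l, u ∈ mOne k k1 ⊔ k.toSubmodule → u' ∈ mOne k k1 ⊔ k.toSubmodule →
        c1 * negKilling l u u' = gm (π (u, 0)) (π (u', 0)))) := by
  classical
  have pd : ∀ x : l, negKilling l x x = 0 → x = 0 := by
    intro x hx
    by_contra h
    have h2 := hneg x h
    rw [nk_apply] at hx
    linarith
  have hrefl : (negKilling l).IsRefl := fun x y h => by
    rw [nk_symm]; exact h
  set s : Submodule ℝ l := k.toSubmodule ⊔ k1.toSubmodule with hs
  have o1 : ∀ n ∈ s, ∀ a ∈ mOne k k1, negKilling l n a = 0 := fun n hn a ha => ha n hn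
  have o1' : ∀ a ∈ mOne k k1, ∀ n ∈ s, negKilling l a n = 0 := fun a ha n hn => by
    rw [nk_symm]; exact ha n hn
  have okk : ∀ (X : k) (W : k1), negKilling l (X : l) (W : l) = 0 :=
    fun X W => horth X X.2 W W.2
  have okk' : ∀ (W : k1) (X : k), negKilling l (W : l) (X : l) = 0 := fun W X => by
    rw [nk_symm]; exact okk X W
  have hks : ∀ X : k, (X : l) ∈ s := fun X => Submodule.mem_sup_left X.2
  have hk1s : ∀ W : k1, (W : l) ∈ s := fun W => Submodule.mem_sup_right W.2
  have hcompl : IsCompl s (mOne k k1) := by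
    have he : mOne k k1 = (negKilling l).orthogonal s := rfl
    rw [he]
    apply LinearMap.BilinForm.isCompl_orthogonal_of_restrict_nondegenerate hrefl
    refine (LinearMap.IsRefl.nondegenerate_iff_separatingLeft (B := (negKilling l).restrict s)
      (fun x y h => hrefl _ _ h)).2 ?_
    intro x hx
    have h0 : negKilling l (x : l) (x : l) = 0 := hx x
    exact Subtype.ext (pd _ h0)
  have decomp : ∀ x : l, ∃ a ∈ mOne k k1, ∃ X : k, ∃ W : k1, x = a + ((X:l) + (W:l)) := by
    intro x
    have hx : x ∈ s ⊔ mOne k k1 := by rw [hcompl.sup_eq_top]; trivial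
    obtain ⟨n, hn, a, ha, rfl⟩ := Submodule.mem_sup.1 hx
    obtain ⟨xk, hxk, w1, hw1, rfl⟩ := Submodule.mem_sup.1 hn
    exact ⟨a, ha, ⟨xk, hxk⟩, ⟨w1, hw1⟩, by rw [add_comm]⟩
  have br_m1 : ∀ z ∈ s, ∀ a ∈ mOne k k1, ⁅z, a⁆ ∈ mOne k k1 := by
    intro z hz a ha
    rw [mem_mOne]
    intro n hn
    rw [nk_lie]
    exact o1 _ (hsum n z hn hz) a ha
  have hm_bot : ∀ z : l × k, z ∈ hSub k k1 → z ∈ mSub k k1 → z = 0 := by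
    rintro z ⟨X, W, rfl⟩ hm
    obtain ⟨U, hU, Y, hUY⟩ := mem_mSub.1 hm
    rw [Prod.ext_iff] at hUY
    obtain ⟨h1, h2⟩ := hUY
    simp only at h1 h2
    have hY : (Y : l) = -(X : l) := by
      have : Y = -X := by rw [h2]; simp
      rw [this]; simp
    have hU2 : U = (X:l) + (X:l) + (W:l) := by
      have h3 : U = (X:l) + (W:l) - (Y:l) := (eq_sub_of_add_eq h1.symm)
      rw [hY] at h3
      rw [h3]; abel
    have hUs : U ∈ s := by
      rw [hU2]; exact add_mem (add_mem (hks X) (hks X)) (hk1s W)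
    have hU0 : U = 0 := pd U (hU U hUs)
    have h3 : (X:l) + (X:l) = -(W:l) := by
      have := hU2; rw [hU0] at this
      have h4 : (0:l) = (X:l) + (X:l) + (W:l) := this
      rw [eq_comm, add_eq_zero_iff_eq_neg] at h4
      exact h4
    have hXk : (X:l) + (X:l) ∈ k.toSubmodule := add_mem X.2 X.2
    have hXk1 : (X:l) + (X:l) ∈ k1.toSubmodule := by rw [h3]; exact neg_mem W.2
    have hXX : (X:l) + (X:l) = 0 := by
      have hmem : (X:l) + (X:l) ∈ k.toSubmodule ⊓ k1.toSubmodule :=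
        Submodule.mem_inf.2 ⟨hXk, hXk1⟩
      rw [hdisj] at hmem
      exact (Submodule.mem_bot ℝ).1 hmem
    have hX0 : (X:l) = 0 := by
      have h2x : (2:ℝ) • (X:l) = 0 := by rw [two_smul]; exact hXX
      rcases smul_eq_zero.1 h2x with h | h
      · norm_num at h
      · exact h
    have hW0 : (W:l) = 0 := by
      have := h3; rw [hX0, add_zero, eq_comm, neg_eq_zero] at this; exact this.symm ▸ rfl
    rw [Prod.ext_iff]
    constructor
    · simp [hX0, hW0]
    · simp only
      exact Subtype.ext hX0
  have π_eq : ∀ w v : l × k, v ∈ mSub k k1 → w - v ∈ hSub k k1 → π w = v := by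
    intro w v hv hwv
    have key : π w - v ∈ hSub k k1 := by
      have he : π w - v = (w - v) - (w - π w) := by abel
      rw [he]; exact sub_mem hwv (hπ w).2
    have key2 : π w - v ∈ mSub k k1 := sub_mem (hπ w).1 hv
    exact sub_eq_zero.1 (hm_bot _ key key2)
  constructor
  · -- PART (i)
    intro hne
    intro α β
    have hα : α = c1 := rfl
    have hβ : β = c1 * c2 / (4 * c1 - c2) := rfl
    have hd : (4 * c1 - c2) ≠ 0 := sub_ne_zero.2 (Ne.symm hne)
    have hαne : α ≠ 0 := hc1.ne'
    have hβne : β ≠ 0 := by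
      rw [hβ]; exact div_ne_zero (mul_ne_zero hc1.ne' hc2.ne') hd
    set t : ℝ := -c2 / (4 * c1 - c2) with ht
    have hαβt : α * t + β = 0 := by rw [hα, hβ, ht]; field_simp; ring
    have ht1 : t - 1 ≠ 0 := by
      intro h0
      rw [sub_eq_zero, ht, div_eq_one_iff_eq hd] at h0
      linarith
    have hαβ : α + β ≠ 0 := by
      rw [hα, hβ]
      intro h0
      field_simp at h0
      have hd' : c1 * 4 - c2 ≠ 0 := by rw [mul_comm]; exact hd
      have h1 : 1 + c2 / (c1 * 4 - c2) = 0 := (mul_eq_zero.1 h0).resolve_left hc1.ne'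
      rw [add_div' _ _ _ hd', div_eq_zero_iff] at h1
      rcases h1 with h1 | h1
      · linarith
      · exact hd' h1
    set pS : Submodule ℝ (l × k) := (hSub k k1).orthogonalBilin (qForm k α β) with hpS
    have mem_p : ∀ w : l × k, w ∈ pS ↔
        ∀ (X : k) (W : k1), qForm k α β ((X:l) + (W:l), X) w = 0 := by
      intro w
      constructor
      · intro hw X W
        exact hw _ ⟨X, W, rfl⟩
      · rintro h n ⟨X, W, rfl⟩
        exact h X W
    have p_mem_of : ∀ U ∈ mOne k k1, ∀ V : k, (U + t • (V:l), V) ∈ pS := by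
      intro U hU V
      rw [mem_p]
      intro X W
      rw [qForm_apply']
      simp only
      have e1 : negKilling l (X:l) U = 0 := o1 _ (hks X) U hU
      have e2 : negKilling l (W:l) U = 0 := o1 _ (hk1s W) U hU
      have e3 : negKilling l (W:l) (V:l) = 0 := okk' W V
      simp only [nk_add_left, nk_add_right, nk_smul_right, e1, e2, e3, mul_zero,
        add_zero, zero_add]
      linear_combination (negKilling l (X:l) (V:l)) * hαβt
    have p_rep : ∀ w ∈ pS, ∃ U ∈ mOne k k1, w.1 = U + t • ((w.2 : k) : l) := by
      intro w hw
      rw [mem_p] at hw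
      obtain ⟨a, ha, X₀, W₀, hdec⟩ := decomp w.1
      have hW₀ : (W₀ : l) = 0 := by
        have h0 := hw 0 W₀
        rw [qForm_apply'] at h0
        simp only [ZeroMemClass.coe_zero, zero_add, nk_zero_left, mul_zero, add_zero] at h0
        have hB : negKilling l (W₀:l) w.1 = negKilling l (W₀:l) (W₀:l) := by
          rw [hdec, nk_add_right, nk_add_right, o1 _ (hk1s W₀) a ha, okk' W₀ X₀]
          ring
        rw [hB] at h0
        have h1 : α * negKilling l (W₀:l) (W₀:l) = 0 := by linarith
        rcases mul_eq_zero.1 h1 with h | h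
        · exact absurd h hαne
        · exact pd _ h
      have hXv : α • (X₀:l) + β • ((w.2:k):l) = 0 := by
        have hz : ∀ X : k, negKilling l (X:l) (α • (X₀:l) + β • ((w.2:k):l)) = 0 := by
          intro X
          have h0 := hw X 0
          rw [qForm_apply'] at h0
          simp only [ZeroMemClass.coe_zero, add_zero] at h0
          have hB : negKilling l (X:l) w.1 = negKilling l (X:l) (X₀:l) := by
            rw [hdec, nk_add_right, nk_add_right, o1 _ (hks X) a ha, hW₀, nk_zero_right]
            ring
          rw [hB] at h0
          rw [nk_add_right, nk_smul_right, nk_smul_right]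
          linarith
        have hmem : α • (X₀:l) + β • ((w.2:k):l) = ((α • X₀ + β • w.2 : k) : l) := rfl
        have h0 := hz (α • X₀ + β • w.2)
        rw [← hmem] at h0
        exact pd _ h0
      have hX₀ : (X₀:l) = t • ((w.2:k):l) := by
        have h' : α • (X₀:l) = (-β) • ((w.2:k):l) := by
          rw [neg_smul]
          exact eq_neg_of_add_eq_zero_left hXv
        have h'' : (X₀:l) = (α⁻¹ * (-β)) • ((w.2:k):l) := by
          rw [mul_smul, ← h', inv_smul_smul₀ hαne]
        rw [h'']
        congr 1
        rw [hα, hβ, ht]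
        have hmul : c1⁻¹ * (c1 * c2 / (4*c1 - c2)) = c2 / (4*c1 - c2) := by
          rw [← mul_div_assoc, ← mul_assoc, inv_mul_cancel₀ hc1.ne', one_mul]
        rw [mul_neg, hmul, neg_div]
      exact ⟨a, ha, by rw [hdec, hW₀, hX₀]; abel⟩
    have hp_bot : ∀ z ∈ hSub k k1, z ∈ pS → z = 0 := by
      rintro z ⟨X, W, rfl⟩ hzp
      rw [mem_p] at hzp
      have hW : (W:l) = 0 := by
        have h0 := hzp 0 W
        rw [qForm_apply'] at h0
        simp only [ZeroMemClass.coe_zero, zero_add, nk_zero_left, mul_zero, add_zero] at h0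
        rw [nk_add_right, okk' W X] at h0
        have h1 : α * negKilling l (W:l) (W:l) = 0 := by linarith
        rcases mul_eq_zero.1 h1 with h | h
        · exact absurd h hαne
        · exact pd _ h
      have hX : (X:l) = 0 := by
        have h0 := hzp X 0
        rw [qForm_apply'] at h0
        simp only [ZeroMemClass.coe_zero, add_zero] at h0
        rw [nk_add_right, hW, nk_zero_right] at h0
        have h1 : (α + β) * negKilling l (X:l) (X:l) = 0 := by linarith
        rcases mul_eq_zero.1 h1 with h | h
        · exact absurd h hαβ
        · exact pd _ h
      rw [Prod.ext_iff]
      exact ⟨by simp [hX, hW], Subtype.ext hX⟩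
    refine ⟨hαne, hβne, ?_, ?_, ⟨?_, ?_⟩, fun w _ => (hπ w).1, ?_, ?_, ?_⟩
    · -- invariance
      intro z w v
      rw [qForm_apply', qForm_apply']
      have e1 := nk_inv z.1 w.1 v.1
      have e2 := nk_inv (z.2:l) (w.2:l) (v.2:l)
      have c1' : ((⁅z, w⁆ : l × k).1) = ⁅z.1, w.1⁆ := rfl
      have c2' : (((⁅z, w⁆ : l × k).2 : k) : l) = ⁅(z.2:l), (w.2:l)⁆ := rfl
      have c3' : ((⁅z, v⁆ : l × k).1) = ⁅z.1, v.1⁆ := rfl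
      have c4' : (((⁅z, v⁆ : l × k).2 : k) : l) = ⁅(z.2:l), (v.2:l)⁆ := rfl
      rw [c1', c2', c3', c4']
      linear_combination α * e1 + β * e2
    · -- nondegeneracy
      intro w hw
      have h1 := hw (w.1, 0)
      rw [qForm_apply'] at h1
      simp only [ZeroMemClass.coe_zero, nk_zero_right, mul_zero, add_zero] at h1
      have hw1 : w.1 = 0 := by
        rcases mul_eq_zero.1 h1 with h | h
        · exact absurd h hαne
        · exact pd _ h
      have h2 := hw (0, w.2)
      rw [qForm_apply'] at h2
      simp only [nk_zero_right, mul_zero, zero_add] at h2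
      have hw2 : ((w.2:k):l) = 0 := by
        rcases mul_eq_zero.1 h2 with h | h
        · exact absurd h hβne
        · exact pd _ h
      rw [Prod.ext_iff]
      exact ⟨hw1, Subtype.ext hw2⟩
    · -- h ⊓ p = ⊥
      rw [eq_bot_iff]
      intro z hz
      rw [Submodule.mem_inf] at hz
      rw [Submodule.mem_bot]
      exact hp_bot z hz.1 hz.2
    · -- h ⊔ p = ⊤
      rw [eq_top_iff]
      intro w _
      rw [Submodule.mem_sup]
      obtain ⟨a, ha, X₀, W₀, hdec⟩ := decomp w.1
      set V : k := (t - 1)⁻¹ • (X₀ - w.2) with hV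
      refine ⟨(((w.2 - V : k) : l) + (W₀:l), w.2 - V), ⟨w.2 - V, W₀, rfl⟩,
        (a + t • (V:l), V), p_mem_of a ha V, ?_⟩
      have hV1 : (t - 1) • (V:l) = (X₀:l) - ((w.2:k):l) := by
        have hc : (V:l) = (t-1)⁻¹ • ((X₀:l) - ((w.2:k):l)) := rfl
        rw [hc, smul_inv_smul₀ ht1]
      rw [Prod.ext_iff]
      constructor
      · show ((w.2 - V : k) : l) + (W₀:l) + (a + t • (V:l)) = w.1
        have hc2 : ((w.2 - V : k) : l) = ((w.2:k):l) - (V:l) := by simp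
        rw [hc2, hdec]
        have e : t • (V:l) = (V:l) + ((X₀:l) - ((w.2:k):l)) := by
          rw [← hV1]; module
        rw [e]; abel
      · show w.2 - V + V = w.2
        abel
    · -- injectivity
      intro w hw w' hw' hpi
      have hsp : w - w' ∈ pS := sub_mem hw hw'
      have hsh : w - w' ∈ hSub k k1 := by
        have he : w - w' = (w - π w) - (w' - π w') := by rw [hpi]; abel
        rw [he]
        exact sub_mem (hπ w).2 (hπ w').2
      exact sub_eq_zero.1 (hp_bot _ hsh hsp)
    · -- surjectivity
      intro v hv
      obtain ⟨U, hU, Y, rfl⟩ := mem_mSub.1 hv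
      set V : k := ((t - 1)⁻¹ * 2) • Y with hV
      refine ⟨(U + t • (V:l), V), p_mem_of U hU V, ?_⟩
      apply π_eq _ _ hv
      refine ⟨V + Y, 0, ?_⟩
      have hVY : (t - 1) • (V:l) = (Y:l) + (Y:l) := by
        have hc : (V:l) = ((t-1)⁻¹ * 2) • (Y:l) := rfl
        rw [hc, smul_smul, show (t-1) * ((t-1)⁻¹ * 2) = 2 by field_simp, two_smul]
      rw [Prod.ext_iff]
      constructor
      · show U + t • (V:l) - (U + (Y:l)) = ((V + Y : k) : l) + ((0:k1):l)
        have hc2 : ((V + Y : k) : l) = (V:l) + (Y:l) := rfl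
        rw [hc2]
        simp only [ZeroMemClass.coe_zero, add_zero]
        have e : t • (V:l) = (V:l) + ((Y:l) + (Y:l)) := by
          rw [← hVY]; module
        rw [e]; abel
      · show V - (-Y) = V + Y
        rw [sub_neg_eq_add]
    · -- metric
      intro w hw w' hw'
      obtain ⟨U, hU, h1⟩ := p_rep w hw
      obtain ⟨U', hU', h1'⟩ := p_rep w' hw'
      set Y : k := ((t - 1) / 2) • w.2 with hY
      set Y' : k := ((t - 1) / 2) • w'.2 with hY'
      have hYc : (Y:l) = ((t-1)/2) • ((w.2:k):l) := rfl
      have hYc' : (Y':l) = ((t-1)/2) • ((w'.2:k):l) := rfl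
      have hπw : π w = (U + (Y:l), -Y) := by
        apply π_eq
        · exact mem_mSub.2 ⟨U, hU, Y, rfl⟩
        · refine ⟨w.2 + Y, 0, ?_⟩
          rw [Prod.ext_iff]
          constructor
          · show w.1 - (U + (Y:l)) = ((w.2 + Y : k) : l) + ((0:k1):l)
            have hc2 : ((w.2 + Y : k) : l) = ((w.2:k):l) + (Y:l) := rfl
            rw [h1, hc2, hYc]
            simp only [ZeroMemClass.coe_zero, add_zero]
            module
          · show w.2 - (-Y) = w.2 + Y
            rw [sub_neg_eq_add]
      have hπw' : π w' = (U' + (Y':l), -Y') := by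
        apply π_eq
        · exact mem_mSub.2 ⟨U', hU', Y', rfl⟩
        · refine ⟨w'.2 + Y', 0, ?_⟩
          rw [Prod.ext_iff]
          constructor
          · show w'.1 - (U' + (Y':l)) = ((w'.2 + Y' : k) : l) + ((0:k1):l)
            have hc2 : ((w'.2 + Y' : k) : l) = ((w'.2:k):l) + (Y':l) := rfl
            rw [h1', hc2, hYc']
            simp only [ZeroMemClass.coe_zero, add_zero]
            module
          · show w'.2 - (-Y') = w'.2 + Y'
            rw [sub_neg_eq_add]
      rw [hπw, hπw', hgm U U' hU hU' Y Y', qForm_apply', h1, h1']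
      have cross1 : negKilling l U ((w'.2:k):l) = 0 := o1' U hU _ (hks w'.2)
      have cross2 : negKilling l ((w.2:k):l) U' = 0 := o1 _ (hks w.2) U' hU'
      rw [hYc, hYc']
      simp only [nk_add_left, nk_add_right, nk_smul_left, nk_smul_right, cross1, cross2,
        mul_zero, zero_add, add_zero]
      have hnum : α * (t * t) + β = c2 * ((t-1)/2 * ((t-1)/2)) := by
        rw [hα, hβ, ht]; linear_combination ((c2^2*(4*c1-c2)⁻¹ + c2)/4) * mul_inv_cancel₀ hd
      linear_combination (negKilling l U U') * hα +
        (negKilling l ((w.2:k):l) ((w'.2:k):l)) * hnum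
  · -- PART (ii)
    intro heq
    intro q
    have hqdef : q = (mOne k k1 ⊔ k.toSubmodule).prod (⊥ : Submodule ℝ k) := rfl
    have mem_q : ∀ w : l × k, w ∈ q ↔ w.1 ∈ mOne k k1 ⊔ k.toSubmodule ∧ w.2 = 0 := by
      intro w
      rw [hqdef, Submodule.mem_prod]
      simp [Submodule.mem_bot]
    have hq_bot : ∀ z ∈ hSub k k1, z ∈ q → z = 0 := by
      rintro z ⟨X, W, rfl⟩ hzq
      rw [mem_q] at hzq
      obtain ⟨hz1, hz2⟩ := hzq
      have hX : (X:l) = 0 := by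
        have hX2 : X = (0:k) := hz2
        rw [hX2]; simp
      have hz1' : (X:l) + (W:l) ∈ mOne k k1 ⊔ k.toSubmodule := hz1
      rw [hX, zero_add] at hz1'
      obtain ⟨a, ha, b, hb, hab⟩ := Submodule.mem_sup.1 hz1'
      have hWW : negKilling l (W:l) (W:l) = 0 := by
        have hWb : negKilling l (W:l) b = 0 := okk' W ⟨b, hb⟩
        have he : negKilling l (W:l) (W:l) = negKilling l (W:l) (a + b) := by rw [hab]
        rw [he, nk_add_right, o1 _ (hk1s W) a ha, hWb, add_zero]
      have hW : (W:l) = 0 := pd _ hWW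
      rw [Prod.ext_iff]
      exact ⟨by simp [hX, hW], Subtype.ext hX⟩
    have q_inv : ∀ Z ∈ hSub k k1, ∀ w ∈ q, ⁅Z, w⁆ ∈ q := by
      rintro Z ⟨X, W, rfl⟩ w hw
      rw [mem_q] at hw ⊢
      obtain ⟨hw1, hw2⟩ := hw
      constructor
      · show ⁅(X:l) + (W:l), w.1⁆ ∈ mOne k k1 ⊔ k.toSubmodule
        obtain ⟨a, ha, b, hb, hab⟩ := Submodule.mem_sup.1 hw1
        rw [← hab, lie_add, add_lie, add_lie]
        have h1 : ⁅(X:l), a⁆ ∈ mOne k k1 := br_m1 _ (hks X) a ha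
        have h2 : ⁅(W:l), a⁆ ∈ mOne k k1 := br_m1 _ (hk1s W) a ha
        have h3 : ⁅(X:l), b⁆ ∈ k.toSubmodule := k.lie_mem X.2 hb
        have h4 : ⁅(W:l), b⁆ = 0 := by
          rw [← lie_skew, hcomm b hb (W:l) W.2, neg_zero]
        refine add_mem (add_mem (Submodule.mem_sup_left h1) (Submodule.mem_sup_left h2)) ?_
        rw [h4, add_zero]
        exact Submodule.mem_sup_right h3
      · show ⁅X, w.2⁆ = 0
        rw [hw2, lie_zero]
    have hmetric : ∀ u u' : l, u ∈ mOne k k1 ⊔ k.toSubmodule →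
        u' ∈ mOne k k1 ⊔ k.toSubmodule →
        c1 * negKilling l u u' = gm (π (u, 0)) (π (u', 0)) := by
      intro u u' hu hu'
      obtain ⟨a, ha, b, hb, hab⟩ := Submodule.mem_sup.1 hu
      obtain ⟨a', ha', b', hb', hab'⟩ := Submodule.mem_sup.1 hu'
      set Y : k := (2:ℝ)⁻¹ • (⟨b, hb⟩ : k) with hYdef
      set Y' : k := (2:ℝ)⁻¹ • (⟨b', hb'⟩ : k) with hY'def
      have hYc : (Y:l) = (2:ℝ)⁻¹ • b := rfl
      have hYc' : (Y':l) = (2:ℝ)⁻¹ • b' := rfl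
      have hπu : π (u, 0) = (a + (Y:l), -Y) := by
        apply π_eq
        · exact mem_mSub.2 ⟨a, ha, Y, rfl⟩
        · refine ⟨Y, 0, ?_⟩
          rw [Prod.ext_iff]
          constructor
          · show u - (a + (Y:l)) = (Y:l) + ((0:k1):l)
            rw [← hab, hYc]
            simp only [ZeroMemClass.coe_zero, add_zero]
            module
          · show (0:k) - (-Y) = Y
            simp
      have hπu' : π (u', 0) = (a' + (Y':l), -Y') := by
        apply π_eq
        · exact mem_mSub.2 ⟨a', ha', Y', rfl⟩
        · refine ⟨Y', 0, ?_⟩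
          rw [Prod.ext_iff]
          constructor
          · show u' - (a' + (Y':l)) = (Y':l) + ((0:k1):l)
            rw [← hab', hYc']
            simp only [ZeroMemClass.coe_zero, add_zero]
            module
          · show (0:k) - (-Y') = Y'
            simp
      rw [hπu, hπu', hgm a a' ha ha' Y Y']
      have cross1 : negKilling l a b' = 0 := o1' a ha b' (Submodule.mem_sup_left hb')
      have cross2 : negKilling l b a' = 0 := o1 _ (Submodule.mem_sup_left hb) a' ha'
      rw [← hab, ← hab', hYc, hYc']
      simp only [nk_add_left, nk_add_right, nk_smul_left, nk_smul_right, cross1, cross2,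
        mul_zero, zero_add, add_zero]
      rw [heq]; ring
    refine ⟨⟨?_, ?_⟩, q_inv, fun w _ => (hπ w).1, ?_, ?_, hmetric⟩
    · rw [eq_bot_iff]
      intro z hz
      rw [Submodule.mem_inf] at hz
      rw [Submodule.mem_bot]
      exact hq_bot z hz.1 hz.2
    · rw [eq_top_iff]
      intro w _
      rw [Submodule.mem_sup]
      obtain ⟨a, ha, X₀, W₀, hdec⟩ := decomp (w.1 - ((w.2:k):l))
      refine ⟨(((w.2:k):l) + (W₀:l), w.2), ⟨w.2, W₀, rfl⟩, (a + (X₀:l), 0), ?_, ?_⟩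
      · rw [mem_q]
        exact ⟨add_mem (Submodule.mem_sup_left ha) (Submodule.mem_sup_right X₀.2), rfl⟩
      · rw [Prod.ext_iff]
        constructor
        · show ((w.2:k):l) + (W₀:l) + (a + (X₀:l)) = w.1
          have he : w.1 = ((w.2:k):l) + (a + ((X₀:l) + (W₀:l))) := by
            rw [← hdec]; abel
          rw [he]; abel
        · show w.2 + 0 = w.2
          rw [add_zero]
    · intro w hw w' hw' hpi
      have hsq : w - w' ∈ q := sub_mem hw hw'
      have hsh : w - w' ∈ hSub k k1 := by
        have he : w - w' = (w - π w) - (w' - π w') := by rw [hpi]; abel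
        rw [he]
        exact sub_mem (hπ w).2 (hπ w').2
      exact sub_eq_zero.1 (hq_bot _ hsh hsq)
    · intro v hv
      obtain ⟨U, hU, Y, rfl⟩ := mem_mSub.1 hv
      refine ⟨(U + ((Y:l) + (Y:l)), 0), ?_, ?_⟩
      · rw [mem_q]
        exact ⟨add_mem (Submodule.mem_sup_left hU)
          (add_mem (Submodule.mem_sup_right Y.2) (Submodule.mem_sup_right Y.2)), rfl⟩
      · apply π_eq _ _ hv
        refine ⟨Y, 0, ?_⟩
        rw [Prod.ext_iff]
        constructor
        · show U + ((Y:l) + (Y:l)) - (U + (Y:l)) = (Y:l) + ((0:k1):l)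
          simp only [ZeroMemClass.coe_zero, add_zero]
          abel
        · show (0:k) - (-Y) = Y
          simp
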